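/- For r,s ≥ 3 both odd, the torus C_r □ C_s contains no 3-antiresolving set; i.e., adim_3(C_r □ C_s) = +∞. -/

import Mathlib

open SimpleGraph

/-- Two vertices have the same distances to every vertex of `S`. -/
def sameDists {V : Type*} (G : SimpleGraph V) (S : Set V) (x y : V) : Prop :=
  ∀ z ∈ S, G.dist x z = G.dist y z

/-- The equivalence class (outside `S`) of `x` under the equal-distance relation `R_S`. -/
def cls {V : Type*} (G : SimpleGraph V) (S : Set V) (x : V) : Set V :=
  {y | y ∉ S ∧ sameDists G S x y}

/-- `S` is a `k`-antiresolving set: `S` is nonempty, does not cover `V`, and the minimum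
size of an equivalence class of `R_S` on `V ∖ S` equals `k`. -/
def IsKARS {V : Type*} (G : SimpleGraph V) (k : ℕ) (S : Set V) : Prop :=
  S.Nonempty ∧ Sᶜ.Nonempty ∧
    (∀ x ∉ S, k ≤ (cls G S x).ncard) ∧ ∃ x ∉ S, (cls G S x).ncard = k

/-- The `k`-metric antidimension: the smallest cardinality of a `k`-antiresolving set,
`⊤` (i.e. `+∞`) if none exists. -/
noncomputable def adim {V : Type*} (G : SimpleGraph V) (k : ℕ) : ℕ∞ :=
  sInf ((fun S => (S.ncard : ℕ∞)) '' {S : Set V | IsKARS G k S})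


open Fin.NatCast Fin.CommRing

/-- circular distance on `Fin n`. -/
def cd {n : ℕ} (t : Fin n) : ℕ := min t.val (n - t.val)

lemma fin_sub_val {n : ℕ} (a b : Fin n) : (a - b).val = (n - b.val + a.val) % n := by
  rw [Fin.sub_def]

lemma cd_eq_min {n : ℕ} [NeZero n] (u v : Fin n) :
    cd (u - v) = min (u - v).val (v - u).val := by
  rcases eq_or_ne u v with rfl | hne
  · simp [cd, sub_self]
  · have h1 := fin_sub_val u v
    have h2 := fin_sub_val v u
    have hu := u.isLt; have hv := v.isLt
    have hne' : u.val ≠ v.val := fun hh => hne (Fin.ext hh)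
    unfold cd
    rcases Nat.lt_or_ge (n - v.val + u.val) n with c1 | c1
    · rw [Nat.mod_eq_of_lt c1] at h1
      have c2 : n ≤ n - u.val + v.val := by omega
      rw [Nat.mod_eq_sub_mod c2, Nat.mod_eq_of_lt (by omega)] at h2
      omega
    · rw [Nat.mod_eq_sub_mod c1, Nat.mod_eq_of_lt (by omega)] at h1
      have c2 : n - u.val + v.val < n := by omega
      rw [Nat.mod_eq_of_lt c2] at h2
      omega

lemma cd_neg {n : ℕ} [NeZero n] (t : Fin n) : cd (-t) = cd t := by
  have h1 := cd_eq_min (0 : Fin n) t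
  have h2 := cd_eq_min t (0 : Fin n)
  simp only [zero_sub, sub_zero] at h1 h2
  omega

lemma cycle_connected {n : ℕ} (hn : 3 ≤ n) : (cycleGraph n).Connected := by
  obtain ⟨k, rfl⟩ : ∃ k, n = k + 1 := ⟨n - 1, by omega⟩
  exact cycleGraph_connected

lemma cycle_dist_le_add {n : ℕ} [NeZero n] (hn : 3 ≤ n) (u : Fin n) (k : ℕ) :
    (cycleGraph n).dist u (u + (k : Fin n)) ≤ k := by
  induction k with
  | zero => simp
  | succ k ih =>
      have hcast : ((k+1 : ℕ) : Fin n) = ((k : ℕ) : Fin n) + 1 := by push_cast; ring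
      have hadj : (cycleGraph n).Adj (u + (k : Fin n)) (u + ((k:ℕ)+1 : ℕ)) := by
        rw [cycleGraph_adj', hcast]
        right
        rw [show u + (((k:ℕ) : Fin n) + 1) - (u + ((k:ℕ) : Fin n)) = 1 by ring]
        rw [Fin.val_one']; exact Nat.mod_eq_of_lt (by omega)
      calc (cycleGraph n).dist u (u + ((k+1:ℕ) : Fin n))
          ≤ (cycleGraph n).dist u (u + (k : Fin n)) +
            (cycleGraph n).dist (u + (k : Fin n)) (u + ((k+1:ℕ) : Fin n)) :=
            (cycle_connected hn).dist_triangle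
        _ ≤ k + 1 := by
            have := SimpleGraph.dist_le (Walk.cons hadj Walk.nil)
            simp only [Walk.length_cons, Walk.length_nil] at this
            omega

lemma cd_step {n : ℕ} (hn : 3 ≤ n) (a b : Fin n)
    (h : (a - b).val = 1 ∨ (b - a).val = 1) :
    min a.val (n - a.val) ≤ min b.val (n - b.val) + 1 := by
  have h1 := fin_sub_val a b
  have h2 := fin_sub_val b a
  have ha := a.isLt; have hb := b.isLt
  rcases Nat.lt_or_ge (n - b.val + a.val) n with c1 | c1
  · rw [Nat.mod_eq_of_lt c1] at h1
    rcases Nat.lt_or_ge (n - a.val + b.val) n with c2 | c2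
    · rw [Nat.mod_eq_of_lt c2] at h2; omega
    · rw [Nat.mod_eq_sub_mod c2, Nat.mod_eq_of_lt (by omega)] at h2; omega
  · rw [Nat.mod_eq_sub_mod c1, Nat.mod_eq_of_lt (by omega)] at h1
    rcases Nat.lt_or_ge (n - a.val + b.val) n with c2 | c2
    · rw [Nat.mod_eq_of_lt c2] at h2; omega
    · rw [Nat.mod_eq_sub_mod c2, Nat.mod_eq_of_lt (by omega)] at h2; omega

lemma cycle_walk_lb {n : ℕ} [NeZero n] (hn : 3 ≤ n) {u v : Fin n}
    (p : (cycleGraph n).Walk u v) :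
    min (u - v).val (v - u).val ≤ p.length := by
  induction p with
  | nil => simp [sub_self]
  | @cons u w v h p ih =>
      rw [cycleGraph_adj'] at h
      have key := cd_step hn (u - v) (w - v) (by
        rcases h with h | h
        · left; rwa [show u - v - (w - v) = u - w by ring]
        · right; rwa [show w - v - (u - v) = w - u by ring])
      rw [Walk.length_cons]
      have m1 := cd_eq_min u v
      have m2 := cd_eq_min w v
      unfold cd at m1 m2
      omega

lemma cycle_dist {n : ℕ} [NeZero n] (hn : 3 ≤ n) (u v : Fin n) :
    (cycleGraph n).dist u v = cd (u - v) := by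
  apply le_antisymm
  · rw [cd_eq_min u v]
    have le1 : (cycleGraph n).dist u v ≤ (v - u).val := by
      have := cycle_dist_le_add hn u (v - u).val
      rwa [Fin.cast_val_eq_self, add_sub_cancel] at this
    have le2 : (cycleGraph n).dist u v ≤ (u - v).val := by
      have := cycle_dist_le_add hn v (u - v).val
      rw [Fin.cast_val_eq_self, add_sub_cancel] at this
      rwa [SimpleGraph.dist_comm]
    omega
  · obtain ⟨p, hp⟩ := (cycle_connected hn).exists_walk_length_eq_dist u v
    rw [cd_eq_min u v, ← hp]
    exact cycle_walk_lb hn p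

section BoxProd
variable {α β : Type*} {G : SimpleGraph α} {H : SimpleGraph β}

lemma boxProd_walk_lb (hG : G.Connected) (hH : H.Connected) {x y : α × β}
    (p : (G □ H).Walk x y) :
    G.dist x.1 y.1 + H.dist x.2 y.2 ≤ p.length := by
  induction p with
  | nil => simp
  | @cons x w y h p ih =>
      rw [Walk.length_cons]
      rw [boxProd_adj] at h
      rcases h with ⟨hadj, heq⟩ | ⟨hadj, heq⟩
      · have t1 : G.dist x.1 y.1 ≤ G.dist x.1 w.1 + G.dist w.1 y.1 := hG.dist_triangle
        have t2 : G.dist x.1 w.1 ≤ 1 := by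
          have := SimpleGraph.dist_le (Walk.cons hadj Walk.nil)
          simpa using this
        rw [← heq] at ih
        omega
      · have t1 : H.dist x.2 y.2 ≤ H.dist x.2 w.2 + H.dist w.2 y.2 := hH.dist_triangle
        have t2 : H.dist x.2 w.2 ≤ 1 := by
          have := SimpleGraph.dist_le (Walk.cons hadj Walk.nil)
          simpa using this
        rw [← heq] at ih
        omega

lemma boxProd_dist (hG : G.Connected) (hH : H.Connected) (x y : α × β) :
    (G □ H).dist x y = G.dist x.1 y.1 + H.dist x.2 y.2 := by
  apply le_antisymm
  · obtain ⟨p, hp⟩ := hG.exists_walk_length_eq_dist x.1 y.1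
    obtain ⟨q, hq⟩ := hH.exists_walk_length_eq_dist x.2 y.2
    have hw := SimpleGraph.dist_le
      ((Walk.boxProdLeft H x.2 p).append (Walk.boxProdRight G y.1 q))
    rw [Walk.length_append] at hw
    have l1 : (Walk.boxProdLeft H x.2 p).length = p.length := Walk.length_map _ _
    have l2 : (Walk.boxProdRight G y.1 q).length = q.length := Walk.length_map _ _
    rw [l1, l2] at hw
    simp only [Prod.mk.eta] at hw
    omega
  · obtain ⟨p, hp⟩ := (hG.boxProd hH).exists_walk_length_eq_dist x y
    rw [← hp]
    exact boxProd_walk_lb hG hH p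

end BoxProd

section Torus
variable {r s : ℕ}

lemma cd_le_half {n : ℕ} (t : Fin n) : cd t ≤ n / 2 := by
  have := t.isLt; unfold cd; omega

lemma cd_eq_half_iff {n : ℕ} (hodd : Odd n) (t : Fin n) :
    cd t = n / 2 ↔ t.val = n / 2 ∨ t.val = n / 2 + 1 := by
  obtain ⟨m, hm⟩ := hodd
  have := t.isLt; unfold cd; omega

lemma cd_succ_eq_iff {n : ℕ} [NeZero n] (hn : 3 ≤ n) (hodd : Odd n) (t : Fin n) :
    cd (t + 1) = cd t ↔ t.val = n / 2 := by
  obtain ⟨m, hm⟩ := hodd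
  have h1 : (1 : Fin n).val = 1 := by rw [Fin.val_one']; exact Nat.mod_eq_of_lt (by omega)
  have hval : (t + 1).val = (t.val + 1) % n := by rw [Fin.add_def, h1]
  have ht := t.isLt
  rcases Nat.lt_or_ge (t.val + 1) n with c | c
  · rw [Nat.mod_eq_of_lt c] at hval
    unfold cd; omega
  · have : (t.val + 1) % n = 0 := by
      have : t.val + 1 = n := by omega
      rw [this, Nat.mod_self]
    rw [this] at hval
    unfold cd; omega

lemma torus_dist (hr : 3 ≤ r) (hs : 3 ≤ s) (x y : Fin r × Fin s) :
    ((cycleGraph r).boxProd (cycleGraph s)).dist x y = cd (x.1 - y.1) + cd (x.2 - y.2) := by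
  haveI : NeZero r := ⟨by omega⟩
  haveI : NeZero s := ⟨by omega⟩
  rw [boxProd_dist (cycle_connected hr) (cycle_connected hs), cycle_dist hr, cycle_dist hs]

lemma fin_add_self_eq_zero {n : ℕ} [NeZero n] (hodd : Odd n) (a : Fin n) (h : a + a = 0) :
    a = 0 := by
  obtain ⟨m, hm⟩ := hodd
  have hv : (a.val + a.val) % n = 0 := by
    have := congrArg Fin.val h
    rwa [Fin.add_def] at this
  have ha := a.isLt
  obtain ⟨c, hc⟩ := Nat.dvd_of_mod_eq_zero hv
  have hcle : c ≤ 1 := by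
    by_contra hc2
    have : n * 2 ≤ n * c := Nat.mul_le_mul_left n (by omega)
    omega
  have hv0 : a.val = 0 := by interval_cases c <;> omega
  exact Fin.ext (by simp [hv0])

end Torus

section Torus2
variable {r s : ℕ}

lemma singleton_ncard_ne_three (hr : 3 ≤ r) (hs : 3 ≤ s) (hro : Odd r) (hso : Odd s)
    (z x : Fin r × Fin s) (hx : x ∉ ({z} : Set (Fin r × Fin s))) :
    (cls ((cycleGraph r).boxProd (cycleGraph s)) {z} x).ncard ≠ 3 := by
  haveI : NeZero r := ⟨by omega⟩
  haveI : NeZero s := ⟨by omega⟩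
  set G := (cycleGraph r).boxProd (cycleGraph s) with hG
  set τ : Fin r × Fin s → Fin r × Fin s :=
    fun y => (z.1 + z.1 - y.1, z.2 + z.2 - y.2) with hτ
  have htinv : ∀ y, τ (τ y) = y := by
    intro y
    simp only [hτ]
    exact Prod.ext (by ring) (by ring)
  have htfix : ∀ y, τ y = y → y = z := by
    intro y h
    rw [Prod.ext_iff] at h
    obtain ⟨h1, h2⟩ := h
    have e1 : (y.1 - z.1) + (y.1 - z.1) = 0 := by
      have : z.1 + z.1 - y.1 = y.1 := h1
      linear_combination -this
    have e2 : (y.2 - z.2) + (y.2 - z.2) = 0 := by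
      have : z.2 + z.2 - y.2 = y.2 := h2
      linear_combination -this
    have := fin_add_self_eq_zero hro _ e1
    have := fin_add_self_eq_zero hso _ e2
    have : y.1 = z.1 := by linear_combination ‹y.1 - z.1 = 0›
    have : y.2 = z.2 := by linear_combination ‹y.2 - z.2 = 0›
    exact Prod.ext ‹y.1 = z.1› ‹y.2 = z.2›
  have htdist : ∀ y, G.dist (τ y) z = G.dist y z := by
    intro y
    rw [hG, torus_dist hr hs, torus_dist hr hs]
    have e1 : (τ y).1 - z.1 = -(y.1 - z.1) := by simp only [hτ]; ring
    have e2 : (τ y).2 - z.2 = -(y.2 - z.2) := by simp only [hτ]; ring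
    rw [e1, e2, cd_neg, cd_neg]
  have htz : τ z = z := by
    simp only [hτ]; exact Prod.ext (by ring) (by ring)
  have hmem : ∀ y, y ∈ cls G {z} x → τ y ∈ cls G {z} x := by
    rintro y ⟨hyS, hyd⟩
    refine ⟨?_, ?_⟩
    · intro hcm
      rw [Set.mem_singleton_iff] at hcm
      apply hyS
      rw [Set.mem_singleton_iff]
      have h2 := congrArg τ hcm
      rw [htinv, htz] at h2
      exact h2
    · intro w hw
      rw [Set.mem_singleton_iff] at hw
      subst hw
      rw [htdist y]
      exact hyd w rfl
  have hne : ∀ y, y ∈ cls G {z} x → τ y ≠ y := by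
    rintro y ⟨hyS, -⟩ h
    exact hyS (Set.mem_singleton_iff.mpr (htfix y h))
  intro h3
  rw [Set.ncard_eq_three] at h3
  obtain ⟨a, b, c, hab, hac, hbc, hC⟩ := h3
  have ha : a ∈ cls G {z} x := by rw [hC]; simp
  have hb : b ∈ cls G {z} x := by rw [hC]; simp
  have hc : c ∈ cls G {z} x := by rw [hC]; simp
  have hta := hmem a ha; rw [hC] at hta
  have htb := hmem b hb; rw [hC] at htb
  have htc := hmem c hc; rw [hC] at htc
  simp only [Set.mem_insert_iff, Set.mem_singleton_iff] at hta htb htc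
  have hnea := hne a ha
  have hneb := hne b hb
  have hnec := hne c hc
  rcases hta with h | h | h
  · exact hnea h
  · -- τ a = b, so τ b = a
    have htba : τ b = a := by rw [← h, htinv]
    rcases htc with h' | h' | h'
    · have : c = b := by rw [← htinv c, h', h]
      exact hbc this.symm
    · have : c = a := by rw [← htinv c, h', htba]
      exact hac this.symm
    · exact hnec h'
  · -- τ a = c
    have htca : τ c = a := by rw [← h, htinv]
    rcases htb with h' | h' | h'
    · have : b = c := by rw [← htinv b, h', h]
      exact hbc this
    · exact hneb h'
    · have : b = a := by rw [← htinv b, h', htca]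
      exact hab this.symm

end Torus2

section Torus3
variable {r s : ℕ}

lemma val_half_eq {n : ℕ} [NeZero n] (hn : 3 ≤ n) (t : Fin n) (h : t.val = n / 2) :
    t = ((n / 2 : ℕ) : Fin n) := by
  apply Fin.ext
  rw [h, Fin.val_natCast]
  exact (Nat.mod_eq_of_lt (by omega)).symm

lemma val_half1_eq {n : ℕ} [NeZero n] (hn : 3 ≤ n) (t : Fin n) (h : t.val = n / 2 + 1) :
    t = ((n / 2 : ℕ) : Fin n) + 1 := by
  apply Fin.ext
  rw [h, Fin.add_def, Fin.val_natCast, Fin.val_one']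
  rw [Nat.mod_eq_of_lt (show n / 2 < n by omega), Nat.mod_eq_of_lt (show 1 < n by omega)]
  exact (Nat.mod_eq_of_lt (by omega)).symm

lemma half_val {n : ℕ} [NeZero n] (hn : 3 ≤ n) : (((n / 2 : ℕ) : Fin n)).val = n / 2 := by
  rw [Fin.val_natCast]; exact Nat.mod_eq_of_lt (by omega)

lemma half1_val {n : ℕ} [NeZero n] (hn : 3 ≤ n) :
    ((((n / 2 : ℕ) : Fin n)) + 1).val = n / 2 + 1 := by
  rw [Fin.add_def, Fin.val_natCast, Fin.val_one']
  rw [Nat.mod_eq_of_lt (show n / 2 < n by omega), Nat.mod_eq_of_lt (show 1 < n by omega)]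
  exact Nat.mod_eq_of_lt (by omega)

lemma cd_half {n : ℕ} [NeZero n] (hn : 3 ≤ n) (hodd : Odd n) (t : Fin n)
    (h : t = ((n / 2 : ℕ) : Fin n) ∨ t = ((n / 2 : ℕ) : Fin n) + 1) :
    cd t = n / 2 := by
  obtain ⟨m, hm⟩ := hodd
  rcases h with h | h
  · rw [h]; unfold cd; rw [half_val hn]; omega
  · rw [h]; unfold cd; rw [half1_val hn]; omega

lemma dist_max_iff (hr : 3 ≤ r) (hs : 3 ≤ s) (hro : Odd r) (hso : Odd s)
    (z y : Fin r × Fin s) :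
    ((cycleGraph r).boxProd (cycleGraph s)).dist y z = r / 2 + s / 2 ↔
      ((y.1 - z.1).val = r / 2 ∨ (y.1 - z.1).val = r / 2 + 1) ∧
      ((y.2 - z.2).val = s / 2 ∨ (y.2 - z.2).val = s / 2 + 1) := by
  rw [torus_dist hr hs]
  have h1 := cd_le_half (y.1 - z.1)
  have h2 := cd_le_half (y.2 - z.2)
  rw [← cd_eq_half_iff hro, ← cd_eq_half_iff hso]
  omega

lemma grid_collapse (hr : 3 ≤ r) (hs : 3 ≤ s) (hro : Odd r) (hso : Odd s)
    (z z' : Fin r × Fin s) (hzz : z ≠ z') (y1 y2 y3 : Fin r × Fin s)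
    (hd1 : ((cycleGraph r).boxProd (cycleGraph s)).dist y1 z = r / 2 + s / 2)
    (hd2 : ((cycleGraph r).boxProd (cycleGraph s)).dist y2 z = r / 2 + s / 2)
    (hd3 : ((cycleGraph r).boxProd (cycleGraph s)).dist y3 z = r / 2 + s / 2)
    (he12 : ((cycleGraph r).boxProd (cycleGraph s)).dist y1 z' =
      ((cycleGraph r).boxProd (cycleGraph s)).dist y2 z')
    (he13 : ((cycleGraph r).boxProd (cycleGraph s)).dist y1 z' =
      ((cycleGraph r).boxProd (cycleGraph s)).dist y3 z') :
    y1 = y2 ∨ y1 = y3 ∨ y2 = y3 := by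
  haveI : NeZero r := ⟨by omega⟩
  haveI : NeZero s := ⟨by omega⟩
  by_contra hcon
  push_neg at hcon
  obtain ⟨h12, h13, h23⟩ := hcon
  set M : Fin r := ((r / 2 : ℕ) : Fin r) with hM
  set N : Fin s := ((s / 2 : ℕ) : Fin s) with hN
  have conv1 : ∀ y : Fin r × Fin s,
      ((cycleGraph r).boxProd (cycleGraph s)).dist y z = r / 2 + s / 2 →
      (y.1 = M + z.1 ∨ y.1 = M + 1 + z.1) ∧ (y.2 = N + z.2 ∨ y.2 = N + 1 + z.2) := by
    intro y hy
    obtain ⟨hA, hB⟩ := (dist_max_iff hr hs hro hso z y).1 hy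
    constructor
    · rcases hA with h | h
      · left; have := val_half_eq hr _ h; rw [sub_eq_iff_eq_add] at this; rw [this]
      · right; have := val_half1_eq hr _ h; rw [sub_eq_iff_eq_add] at this
        rw [this]
    · rcases hB with h | h
      · left; have := val_half_eq hs _ h; rw [sub_eq_iff_eq_add] at this; rw [this]
      · right; have := val_half1_eq hs _ h; rw [sub_eq_iff_eq_add] at this
        rw [this]
  obtain ⟨ca1, cb1⟩ := conv1 y1 hd1
  obtain ⟨ca2, cb2⟩ := conv1 y2 hd2
  obtain ⟨ca3, cb3⟩ := conv1 y3 hd3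
  -- column pair forces z.2 = z'.2
  have Hcol : ∀ p q : Fin r × Fin s, p ≠ q → p.1 = q.1 →
      (p.2 = N + z.2 ∨ p.2 = N + 1 + z.2) → (q.2 = N + z.2 ∨ q.2 = N + 1 + z.2) →
      ((cycleGraph r).boxProd (cycleGraph s)).dist p z' =
        ((cycleGraph r).boxProd (cycleGraph s)).dist q z' → z.2 = z'.2 := by
    intro p q hpq h1 hp2 hq2 he
    rw [torus_dist hr hs, torus_dist hr hs, h1] at he
    have he2 : cd (p.2 - z'.2) = cd (q.2 - z'.2) := by omega
    have hne2 : p.2 ≠ q.2 := fun h => hpq (Prod.ext h1 h)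
    have key : cd ((N + z.2 - z'.2) + 1) = cd (N + z.2 - z'.2) := by
      rcases hp2 with h | h <;> rcases hq2 with h' | h'
      · exact absurd (h.trans h'.symm) hne2
      · rw [h, h'] at he2
        rw [show N + 1 + z.2 - z'.2 = (N + z.2 - z'.2) + 1 by ring] at he2
        exact he2.symm
      · rw [h, h'] at he2
        rw [show N + 1 + z.2 - z'.2 = (N + z.2 - z'.2) + 1 by ring] at he2
        exact he2
      · exact absurd (h.trans h'.symm) hne2
    have := (cd_succ_eq_iff hs hso _).1 key
    have := val_half_eq hs _ this
    have : N + z.2 - z'.2 = N := this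
    linear_combination this
  have Hrow : ∀ p q : Fin r × Fin s, p ≠ q → p.2 = q.2 →
      (p.1 = M + z.1 ∨ p.1 = M + 1 + z.1) → (q.1 = M + z.1 ∨ q.1 = M + 1 + z.1) →
      ((cycleGraph r).boxProd (cycleGraph s)).dist p z' =
        ((cycleGraph r).boxProd (cycleGraph s)).dist q z' → z.1 = z'.1 := by
    intro p q hpq h2 hp1 hq1 he
    rw [torus_dist hr hs, torus_dist hr hs, h2] at he
    have he1 : cd (p.1 - z'.1) = cd (q.1 - z'.1) := by omega
    have hne1 : p.1 ≠ q.1 := fun h => hpq (Prod.ext h h2)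
    have key : cd ((M + z.1 - z'.1) + 1) = cd (M + z.1 - z'.1) := by
      rcases hp1 with h | h <;> rcases hq1 with h' | h'
      · exact absurd (h.trans h'.symm) hne1
      · rw [h, h'] at he1
        rw [show M + 1 + z.1 - z'.1 = (M + z.1 - z'.1) + 1 by ring] at he1
        exact he1.symm
      · rw [h, h'] at he1
        rw [show M + 1 + z.1 - z'.1 = (M + z.1 - z'.1) + 1 by ring] at he1
        exact he1
      · exact absurd (h.trans h'.symm) hne1
    have := (cd_succ_eq_iff hr hro _).1 key
    have := val_half_eq hr _ this
    have : M + z.1 - z'.1 = M := this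
    linear_combination this
  have hz2 : z.2 = z'.2 := by
    have hor : y1.1 = y2.1 ∨ y1.1 = y3.1 ∨ y2.1 = y3.1 := by
      rcases ca1 with h1 | h1 <;> rcases ca2 with h2 | h2 <;> rcases ca3 with h3 | h3 <;>
        simp [h1, h2, h3]
    rcases hor with h | h | h
    · exact Hcol y1 y2 h12 h cb1 cb2 he12
    · exact Hcol y1 y3 h13 h cb1 cb3 he13
    · exact Hcol y2 y3 h23 h cb2 cb3 (he12.symm.trans he13)
  have hz1 : z.1 = z'.1 := by
    have hor : y1.2 = y2.2 ∨ y1.2 = y3.2 ∨ y2.2 = y3.2 := by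
      rcases cb1 with h1 | h1 <;> rcases cb2 with h2 | h2 <;> rcases cb3 with h3 | h3 <;>
        simp [h1, h2, h3]
    rcases hor with h | h | h
    · exact Hrow y1 y2 h12 h ca1 ca2 he12
    · exact Hrow y1 y3 h13 h ca1 ca3 he13
    · exact Hrow y2 y3 h23 h ca2 ca3 (he12.symm.trans he13)
  exact hzz (Prod.ext hz1 hz2)

end Torus3

section Torus4
variable {r s : ℕ}

lemma no_two (hr : 3 ≤ r) (hs : 3 ≤ s) (hro : Odd r) (hso : Odd s)
    (S : Set (Fin r × Fin s)) (hSc : Sᶜ.Nonempty)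
    (hall : ∀ x ∉ S, 3 ≤ (cls ((cycleGraph r).boxProd (cycleGraph s)) S x).ncard)
    (z z' : Fin r × Fin s) (hz : z ∈ S) (hz' : z' ∈ S) (hne : z ≠ z') : False := by
  haveI : NeZero r := ⟨by omega⟩
  haveI : NeZero s := ⟨by omega⟩
  obtain ⟨mr, hmr⟩ := id hro
  obtain ⟨ms, hms⟩ := id hso
  set M : Fin r := ((r / 2 : ℕ) : Fin r) with hM
  set N : Fin s := ((s / 2 : ℕ) : Fin s) with hN
  -- Step 1: every vertex at maximal distance from a vertex of S lies in S
  have hgrid : ∀ z0 ∈ S, ∀ y : Fin r × Fin s,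
      ((cycleGraph r).boxProd (cycleGraph s)).dist y z0 = r / 2 + s / 2 → y ∈ S := by
    intro z0 hz0 y hy
    by_contra hyS
    obtain ⟨z1, hz1S, hz1ne⟩ : ∃ z1 ∈ S, z1 ≠ z0 := by
      by_cases h : z0 = z
      · exact ⟨z', hz', by rw [h]; exact hne.symm⟩
      · exact ⟨z, hz, fun h' => h h'.symm⟩
    obtain ⟨t, hts, htc⟩ := Set.exists_subset_card_eq (hall y hyS)
    rw [Set.ncard_eq_three] at htc
    obtain ⟨a, b, c, hab, hac, hbc, hteq⟩ := htc
    have ha := hts (by rw [hteq]; simp : a ∈ t)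
    have hb := hts (by rw [hteq]; simp : b ∈ t)
    have hc := hts (by rw [hteq]; simp : c ∈ t)
    have da0 : ((cycleGraph r).boxProd (cycleGraph s)).dist a z0 = r / 2 + s / 2 := by
      rw [← ha.2 z0 hz0]; exact hy
    have db0 : ((cycleGraph r).boxProd (cycleGraph s)).dist b z0 = r / 2 + s / 2 := by
      rw [← hb.2 z0 hz0]; exact hy
    have dc0 : ((cycleGraph r).boxProd (cycleGraph s)).dist c z0 = r / 2 + s / 2 := by
      rw [← hc.2 z0 hz0]; exact hy
    have eab : ((cycleGraph r).boxProd (cycleGraph s)).dist a z1 =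
        ((cycleGraph r).boxProd (cycleGraph s)).dist b z1 := by
      rw [← ha.2 z1 hz1S, ← hb.2 z1 hz1S]
    have eac : ((cycleGraph r).boxProd (cycleGraph s)).dist a z1 =
        ((cycleGraph r).boxProd (cycleGraph s)).dist c z1 := by
      rw [← ha.2 z1 hz1S, ← hc.2 z1 hz1S]
    rcases grid_collapse hr hs hro hso z0 z1 hz1ne.symm a b c da0 db0 dc0 eab eac with
      h | h | h
    · exact hab h
    · exact hac h
    · exact hbc h
  -- Step 2: membership of the four "antipodal" grid points
  have hpt : ∀ a : Fin r, ∀ b : Fin s, (a, b) ∈ S → ∀ t1 : Fin r, ∀ t2 : Fin s,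
      (t1 = M ∨ t1 = M + 1) → (t2 = N ∨ t2 = N + 1) → (t1 + a, t2 + b) ∈ S := by
    intro a b hab t1 t2 ht1 ht2
    apply hgrid (a, b) hab
    rw [torus_dist hr hs]
    have e1 : (t1 + a, t2 + b).1 - (a, b).1 = t1 := by simp
    have e2 : (t1 + a, t2 + b).2 - (a, b).2 = t2 := by simp
    rw [e1, e2, cd_half hr hro t1 ht1, cd_half hs hso t2 ht2]
  have hMM : M + M = (-1 : Fin r) := by
    have h1 : ((r - 1 : ℕ) : Fin r) + 1 = 0 := by
      have : ((r - 1 : ℕ) : Fin r) + 1 = ((r - 1 + 1 : ℕ) : Fin r) := by push_cast; ring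
      rw [this, show r - 1 + 1 = r by omega, Fin.natCast_self]
    have h2 : M + M = ((r - 1 : ℕ) : Fin r) := by
      rw [hM, ← Nat.cast_add, show r / 2 + r / 2 = r - 1 by omega]
    rw [h2]
    exact eq_neg_of_add_eq_zero_left h1
  have hNN : N + N = (-1 : Fin s) := by
    have h1 : ((s - 1 : ℕ) : Fin s) + 1 = 0 := by
      have : ((s - 1 : ℕ) : Fin s) + 1 = ((s - 1 + 1 : ℕ) : Fin s) := by push_cast; ring
      rw [this, show s - 1 + 1 = s by omega, Fin.natCast_self]
    have h2 : N + N = ((s - 1 : ℕ) : Fin s) := by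
      rw [hN, ← Nat.cast_add, show s / 2 + s / 2 = s - 1 by omega]
    rw [h2]
    exact eq_neg_of_add_eq_zero_left h1
  have hdec1 : ∀ a : Fin r, ∀ b : Fin s, (a, b) ∈ S → (a - 1, b) ∈ S := by
    intro a b hab
    have hq := hpt a b hab M N (Or.inl rfl) (Or.inl rfl)
    have := hpt (M + a) (N + b) hq M (N + 1) (Or.inl rfl) (Or.inr rfl)
    have e : ((M + (M + a) : Fin r), ((N + 1) + (N + b) : Fin s)) = (a - 1, b) := by
      refine Prod.ext ?_ ?_
      · show M + (M + a) = a - 1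
        linear_combination hMM
      · show N + 1 + (N + b) = b
        linear_combination hNN
    rwa [e] at this
  have hdec2 : ∀ a : Fin r, ∀ b : Fin s, (a, b) ∈ S → (a, b - 1) ∈ S := by
    intro a b hab
    have hq := hpt a b hab M N (Or.inl rfl) (Or.inl rfl)
    have := hpt (M + a) (N + b) hq (M + 1) N (Or.inr rfl) (Or.inl rfl)
    have e : (((M + 1) + (M + a) : Fin r), (N + (N + b) : Fin s)) = (a, b - 1) := by
      refine Prod.ext ?_ ?_
      · show M + 1 + (M + a) = a
        linear_combination hMM
      · show N + (N + b) = b - 1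
        linear_combination hNN
    rwa [e] at this
  -- Step 3: S is everything, contradiction
  have hiter1 : ∀ (k : ℕ) (a : Fin r) (b : Fin s), (a, b) ∈ S → (a - (k : Fin r), b) ∈ S := by
    intro k
    induction k with
    | zero => intro a b hab; simpa using hab
    | succ k ih =>
        intro a b hab
        have := hdec1 _ _ (ih a b hab)
        have e : ((a - (k : Fin r)) - 1 : Fin r) = a - ((k + 1 : ℕ) : Fin r) := by
          push_cast; ring
        rwa [e] at this
  have hiter2 : ∀ (k : ℕ) (a : Fin r) (b : Fin s), (a, b) ∈ S → (a, b - (k : Fin s)) ∈ S := by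
    intro k
    induction k with
    | zero => intro a b hab; simpa using hab
    | succ k ih =>
        intro a b hab
        have := hdec2 _ _ (ih a b hab)
        have e : ((b - (k : Fin s)) - 1 : Fin s) = b - ((k + 1 : ℕ) : Fin s) := by
          push_cast; ring
        rwa [e] at this
  obtain ⟨w, hw⟩ := hSc
  apply hw
  have h1 : (z.1 - ((z.1 - w.1).val : Fin r), z.2) ∈ S := by
    apply hiter1
    simpa using hz
  rw [Fin.cast_val_eq_self, sub_sub_cancel] at h1
  have h2 : (w.1, z.2 - ((z.2 - w.2).val : Fin s)) ∈ S := by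
    apply hiter2
    exact h1
  rw [Fin.cast_val_eq_self, sub_sub_cancel] at h2
  simpa using h2

end Torus4


/-- For odd `r, s ≥ 3`, the torus `C_r □ C_s` has no 3-antiresolving set, i.e.
`adim_3(C_r □ C_s) = +∞`. -/
theorem stmt4 (r s : ℕ) (hr : 3 ≤ r) (hs : 3 ≤ s) (hro : Odd r) (hso : Odd s) :
    (¬∃ S : Set (Fin r × Fin s), IsKARS ((cycleGraph r).boxProd (cycleGraph s)) 3 S) ∧
    adim ((cycleGraph r).boxProd (cycleGraph s)) 3 = ⊤ := by
  have hmain : ¬∃ S : Set (Fin r × Fin s),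
      IsKARS ((cycleGraph r).boxProd (cycleGraph s)) 3 S := by
    rintro ⟨S, hSne, hSc, hall, x, hxS, hx3⟩
    by_cases hsub : ∃ z ∈ S, ∃ z' ∈ S, z ≠ z'
    · obtain ⟨z, hz, z', hz', hne⟩ := hsub
      exact no_two hr hs hro hso S hSc hall z z' hz hz' hne
    · push_neg at hsub
      obtain ⟨z, hz⟩ := hSne
      have hSeq : S = {z} :=
        Set.eq_singleton_iff_unique_mem.2 ⟨hz, fun w hw => hsub w hw z hz⟩
      rw [hSeq] at hx3 hxS
      exact singleton_ncard_ne_three hr hs hro hso z x hxS hx3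
  refine ⟨hmain, ?_⟩
  have hempty : {S : Set (Fin r × Fin s) |
      IsKARS ((cycleGraph r).boxProd (cycleGraph s)) 3 S} = ∅ := by
    rw [Set.eq_empty_iff_forall_notMem]
    intro S hS
    exact hmain ⟨S, hS⟩
  rw [adim, hempty, Set.image_empty, sInf_empty]
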